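/- Backward state marginal recursion bound: if two backward Markov dynamics have conditional transition kernels whose expected TV distance under the first chain's time-(t+1) state-action marginal is at most ε_m, and the backward policies differ in TV by at most ε_π uniformly over states, then the TV distance between the time-t state marginals satisfies D_TV(p1^t || p2^t) ≤ ε_m + ε_π + D_TV(p1^{t+1} || p2^{t+1}). -/

import Mathlib

open Finset

lemma tri_bound (a₁ a₂ b₁ b₂ c₁ c₂ : ℝ) (ha : 0 ≤ a₁) (hb : 0 ≤ b₁)
    (hb2 : 0 ≤ b₂) (hc2 : 0 ≤ c₂) :
    |a₁*b₁*c₁ - a₂*b₂*c₂| ≤ a₁*b₁* |c₁-c₂| + a₁* |b₁-b₂| *c₂ + |a₁-a₂| *b₂*c₂ := by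
  have h : a₁*b₁*c₁ - a₂*b₂*c₂
      = a₁*b₁*(c₁-c₂) + (a₁*(b₁-b₂)*c₂ + (a₁-a₂)*b₂*c₂) := by ring
  have h1 : |a₁*b₁*(c₁-c₂)| = a₁*b₁* |c₁-c₂| := by
    rw [abs_mul, abs_of_nonneg (mul_nonneg ha hb)]
  have h2 : |a₁*(b₁-b₂)*c₂| = a₁* |b₁-b₂| *c₂ := by
    rw [abs_mul, abs_mul, abs_of_nonneg ha, abs_of_nonneg hc2]
  have h3 : |(a₁-a₂)*b₂*c₂| = |a₁-a₂| *b₂*c₂ := by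
    rw [abs_mul, abs_mul, abs_of_nonneg hb2, abs_of_nonneg hc2]
  rw [h]
  calc |a₁*b₁*(c₁-c₂) + (a₁*(b₁-b₂)*c₂ + (a₁-a₂)*b₂*c₂)|
      ≤ |a₁*b₁*(c₁-c₂)| + |a₁*(b₁-b₂)*c₂ + (a₁-a₂)*b₂*c₂| := abs_add_le _ _
    _ ≤ |a₁*b₁*(c₁-c₂)| + (|a₁*(b₁-b₂)*c₂| + |(a₁-a₂)*b₂*c₂|) := by
        gcongr; exact abs_add_le _ _
    _ = a₁*b₁* |c₁-c₂| + a₁* |b₁-b₂| *c₂ + |a₁-a₂| *b₂*c₂ := by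
        rw [h1, h2, h3]; ring

/-- Backward state marginal recursion bound. -/
theorem backward_state_marginal_distance_bound
    {S A : Type*} [Fintype S] [Fintype A]
    (μ₁ μ₂ : S → ℝ) (π₁ π₂ : S → A → ℝ) (T₁ T₂ : S → A → S → ℝ)
    (εm επ : ℝ)
    (hμ₁ : ∀ s, 0 ≤ μ₁ s) (hμ₂ : ∀ s, 0 ≤ μ₂ s)
    (hμ₁s : ∑ s, μ₁ s = 1) (hμ₂s : ∑ s, μ₂ s = 1)
    (hπ₁ : ∀ s a, 0 ≤ π₁ s a) (hπ₂ : ∀ s a, 0 ≤ π₂ s a)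
    (hπ₁s : ∀ s, ∑ a, π₁ s a = 1) (hπ₂s : ∀ s, ∑ a, π₂ s a = 1)
    (hT₁ : ∀ s' a s, 0 ≤ T₁ s' a s) (hT₂ : ∀ s' a s, 0 ≤ T₂ s' a s)
    (hT₁s : ∀ s' a, ∑ s, T₁ s' a s = 1) (hT₂s : ∀ s' a, ∑ s, T₂ s' a s = 1)
    (hm : ∑ s', ∑ a, μ₁ s' * π₁ s' a *
        ((1 / 2) * ∑ s, |T₁ s' a s - T₂ s' a s|) ≤ εm)
    (hπ : ∀ s', (1 / 2) * ∑ a, |π₁ s' a - π₂ s' a| ≤ επ) :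
    (1 / 2) * ∑ s, |(∑ s', ∑ a, μ₁ s' * π₁ s' a * T₁ s' a s) -
        (∑ s', ∑ a, μ₂ s' * π₂ s' a * T₂ s' a s)| ≤
      εm + επ + (1 / 2) * ∑ s, |μ₁ s - μ₂ s| := by
  -- pointwise bound
  have key : ∀ s : S, |(∑ s', ∑ a, μ₁ s' * π₁ s' a * T₁ s' a s) -
      (∑ s', ∑ a, μ₂ s' * π₂ s' a * T₂ s' a s)| ≤
      ∑ s', ∑ a, (μ₁ s' * π₁ s' a * |T₁ s' a s - T₂ s' a s|
        + μ₁ s' * |π₁ s' a - π₂ s' a| * T₂ s' a s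
        + |μ₁ s' - μ₂ s'| * π₂ s' a * T₂ s' a s) := by
    intro s
    have e : (∑ s', ∑ a, μ₁ s' * π₁ s' a * T₁ s' a s) -
        (∑ s', ∑ a, μ₂ s' * π₂ s' a * T₂ s' a s)
        = ∑ s', ∑ a, (μ₁ s' * π₁ s' a * T₁ s' a s
            - μ₂ s' * π₂ s' a * T₂ s' a s) := by
      rw [← Finset.sum_sub_distrib]
      exact Finset.sum_congr rfl fun s' _ => (Finset.sum_sub_distrib _ _).symm
    rw [e]
    refine (Finset.abs_sum_le_sum_abs _ _).trans
      (Finset.sum_le_sum fun s' _ => ?_)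
    refine (Finset.abs_sum_le_sum_abs _ _).trans
      (Finset.sum_le_sum fun a _ => ?_)
    exact tri_bound _ _ _ _ _ _ (hμ₁ s') (hπ₁ s' a) (hπ₂ s' a) (hT₂ s' a s)
  have hA : (1/2) * ∑ s, ∑ s', ∑ a,
      μ₁ s' * π₁ s' a * |T₁ s' a s - T₂ s' a s| ≤ εm := by
    calc (1/2) * ∑ s, ∑ s', ∑ a, μ₁ s' * π₁ s' a * |T₁ s' a s - T₂ s' a s|
        = ∑ s', ∑ a, μ₁ s' * π₁ s' a * ((1/2) * ∑ s, |T₁ s' a s - T₂ s' a s|) := by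
          simp only [Finset.mul_sum]
          rw [Finset.sum_comm]
          refine Finset.sum_congr rfl fun s' _ => ?_
          rw [Finset.sum_comm]
          refine Finset.sum_congr rfl fun a _ => ?_
          refine Finset.sum_congr rfl fun s _ => ?_
          ring
      _ ≤ εm := hm
  have hB : (1/2) * ∑ s, ∑ s', ∑ a,
      μ₁ s' * |π₁ s' a - π₂ s' a| * T₂ s' a s ≤ επ := by
    have e : ∑ s, ∑ s', ∑ a, μ₁ s' * |π₁ s' a - π₂ s' a| * T₂ s' a s
        = ∑ s', μ₁ s' * ∑ a, |π₁ s' a - π₂ s' a| := by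
      rw [Finset.sum_comm]
      refine Finset.sum_congr rfl fun s' _ => ?_
      rw [Finset.sum_comm, Finset.mul_sum]
      refine Finset.sum_congr rfl fun a _ => ?_
      rw [← Finset.mul_sum, hT₂s, mul_one]
    rw [e]
    calc (1/2) * ∑ s', μ₁ s' * ∑ a, |π₁ s' a - π₂ s' a|
        = ∑ s', μ₁ s' * ((1/2) * ∑ a, |π₁ s' a - π₂ s' a|) := by
          rw [Finset.mul_sum]
          exact Finset.sum_congr rfl fun s' _ => by ring
      _ ≤ ∑ s', μ₁ s' * επ := Finset.sum_le_sum fun s' _ =>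
          mul_le_mul_of_nonneg_left (hπ s') (hμ₁ s')
      _ = επ := by rw [← Finset.sum_mul, hμ₁s, one_mul]
  have hC : (1/2) * ∑ s, ∑ s', ∑ a,
      |μ₁ s' - μ₂ s'| * π₂ s' a * T₂ s' a s
      = (1/2) * ∑ s', |μ₁ s' - μ₂ s'| := by
    congr 1
    rw [Finset.sum_comm]
    refine Finset.sum_congr rfl fun s' _ => ?_
    rw [Finset.sum_comm]
    calc ∑ a, ∑ s, |μ₁ s' - μ₂ s'| * π₂ s' a * T₂ s' a s
        = ∑ a, |μ₁ s' - μ₂ s'| * π₂ s' a := by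
          refine Finset.sum_congr rfl fun a _ => ?_
          rw [← Finset.mul_sum, hT₂s, mul_one]
      _ = |μ₁ s' - μ₂ s'| := by rw [← Finset.mul_sum, hπ₂s, mul_one]
  have step : (1/2) * ∑ s, |(∑ s', ∑ a, μ₁ s' * π₁ s' a * T₁ s' a s) -
      (∑ s', ∑ a, μ₂ s' * π₂ s' a * T₂ s' a s)| ≤
      (1/2) * ∑ s, ∑ s', ∑ a, (μ₁ s' * π₁ s' a * |T₁ s' a s - T₂ s' a s|
        + μ₁ s' * |π₁ s' a - π₂ s' a| * T₂ s' a s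
        + |μ₁ s' - μ₂ s'| * π₂ s' a * T₂ s' a s) := by
    have : (0:ℝ) ≤ 1/2 := by norm_num
    exact mul_le_mul_of_nonneg_left (Finset.sum_le_sum fun s _ => key s) this
  refine step.trans ?_
  have split : (1/2) * ∑ s, ∑ s', ∑ a, (μ₁ s' * π₁ s' a * |T₁ s' a s - T₂ s' a s|
        + μ₁ s' * |π₁ s' a - π₂ s' a| * T₂ s' a s
        + |μ₁ s' - μ₂ s'| * π₂ s' a * T₂ s' a s)
      = (1/2) * (∑ s, ∑ s', ∑ a, μ₁ s' * π₁ s' a * |T₁ s' a s - T₂ s' a s|)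
      + (1/2) * (∑ s, ∑ s', ∑ a, μ₁ s' * |π₁ s' a - π₂ s' a| * T₂ s' a s)
      + (1/2) * (∑ s, ∑ s', ∑ a, |μ₁ s' - μ₂ s'| * π₂ s' a * T₂ s' a s) := by
    simp only [Finset.sum_add_distrib]
    ring
  rw [split]
  linarith [hA, hB, hC.le, hC.ge]
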